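/- arXiv:2112.13962 — 2 statements merged into one kernel-verified Lean document; each statement's English description precedes it below -/
import Mathlib

section
/- The operators S_{12}, S_{13}, S_{21}, S_{23} on L²(ℝ⁶) defined by (S_{ij} f)(…, t_i, s_i, …, t_j, s_j, …) = f with substitutions s_i ↦ s_i + s_j and t_j ↦ t_j − t_i (coordinates ordered (t₁,s₁,t₂,s₂,t₃,s₃)) satisfy the pentagon-type relation S_{13} S_{21} = S_{21} S_{23} S_{13}. -/
/-- The operator `S_{ij}` on functions of `(t₁,s₁,t₂,s₂,t₃,s₃) ∈ ℝ⁶` (here recorded as a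
pair of coordinate functions `t s : Fin 3 → ℝ`), acting by the substitutions
`s_i ↦ s_i + s_j` and `t_j ↦ t_j − t_i`. -/
def Ssub (i j : Fin 3) (f : (Fin 3 → ℝ) → (Fin 3 → ℝ) → ℂ) :
    (Fin 3 → ℝ) → (Fin 3 → ℝ) → ℂ :=
  fun t s => f (Function.update t j (t j - t i)) (Function.update s i (s i + s j))

/-- The pentagon-type relation `S₁₃ S₂₁ = S₂₁ S₂₃ S₁₃` on `L²(ℝ⁶)`
(indices `1,2,3` are `0,1,2 : Fin 3`). -/
theorem Ssub_pentagon (f : (Fin 3 → ℝ) → (Fin 3 → ℝ) → ℂ) :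
    Ssub 0 2 (Ssub 1 0 f) = Ssub 1 0 (Ssub 1 2 (Ssub 0 2 f)) := by
  funext t s
  simp only [Ssub]
  congr 1 <;> funext k <;> fin_cases k <;>
    simp [Function.update] <;> ring
end

section
/- The formal computation A³ = −c³ · id: if A = c · S_m ∘ e^{−q_s + ħ⁻¹ p_t} with m = ((-1,-1),(1,0)), then using S_m conjugation relations and the central-commutator BCH identity, the product of the three exponential factors e^{q_t + ħ⁻¹ p_s} · e^{−q_t + q_s + ħ⁻¹(−p_t − p_s)} · e^{−q_s + ħ⁻¹ p_t} equals e^{πi} · id = −id, whence A³ = −c³ · id. -/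
/-- The formal computation `A³ = −c³·id`: with `A = c·S_m ∘ e^{−q_s + ħ⁻¹p_t}`,
`m = ((-1,-1),(1,0))`, using the `S_m`-conjugation relations and the
central-commutator BCH identity, the product of the three exponential factors
`e^{q_t + ħ⁻¹p_s} · e^{−q_t+q_s+ħ⁻¹(−p_t−p_s)} · e^{−q_s+ħ⁻¹p_t}` equals
`e^{πi}·id = −id`, whence `A³ = −c³·id`. -/
theorem formal_A_cubed
    (A : Type*) [Ring A] [Algebra ℂ A]
    (hbar : ℝ) (hpos : 0 < hbar) (c : ℂ)
    (E : A → A)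
    -- truncated BCH identity for central commutators
    (hBCH : ∀ a b : A, Commute (a * b - b * a) a → Commute (a * b - b * a) b →
      E a * E b = E (a + b + ((1 : ℂ) / 2) • (a * b - b * a)))
    -- exponentials of central scalars factor out as scalar exponentials
    (hshift : ∀ a : A, ∀ z : ℂ, E (a + algebraMap ℂ A z) = Complex.exp z • E a)
    (hE0 : E 0 = 1)
    -- Heisenberg relations
    (qt qs pt ps : A)
    (h1 : pt * qt - qt * pt = algebraMap ℂ A (Real.pi * Complex.I * hbar))
    (h2 : ps * qs - qs * ps = algebraMap ℂ A (Real.pi * Complex.I * hbar))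
    (h3 : pt * qs = qs * pt) (h4 : ps * qt = qt * ps)
    (h5 : pt * ps = ps * pt) (h6 : qt * qs = qs * qt)
    -- the special linear operator S_m, of order three, with its conjugation rules
    (Sm : Aˣ) (hS3 : Sm ^ 3 = 1)
    (hSqt : (Sm : A) * qt * (↑Sm⁻¹ : A) = -qt + qs)
    (hSqs : (Sm : A) * qs * (↑Sm⁻¹ : A) = -qt)
    (hSpt : (Sm : A) * pt * (↑Sm⁻¹ : A) = ps)
    (hSps : (Sm : A) * ps * (↑Sm⁻¹ : A) = -pt - ps)
    -- S_m conjugation commutes with E (conjugation by a unitary commutes with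
    -- functional calculus)
    (hSE : ∀ a : A, (Sm : A) * E a * (↑Sm⁻¹ : A)
      = E ((Sm : A) * a * (↑Sm⁻¹ : A))) :
    -- the three-exponential identity
    (E (qt + ((hbar⁻¹ : ℝ) : ℂ) • ps) *
       E (-qt + qs + ((hbar⁻¹ : ℝ) : ℂ) • (-pt - ps)) *
       E (-qs + ((hbar⁻¹ : ℝ) : ℂ) • pt)
      = algebraMap ℂ A (Complex.exp (Real.pi * Complex.I))) ∧
    (algebraMap ℂ A (Complex.exp (Real.pi * Complex.I)) = (-1 : A)) ∧
    -- hence A³ = −c³·id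
    ((c • ((Sm : A) * E (-qs + ((hbar⁻¹ : ℝ) : ℂ) • pt))) ^ 3
      = -(c ^ 3) • (1 : A)) := by

  have hb0 : ((hbar : ℂ)) ≠ 0 := by exact_mod_cast hpos.ne'
  set u : ℂ := ((hbar⁻¹ : ℝ) : ℂ) with hu
  set z : ℂ := ((Real.pi : ℂ) * Complex.I * (hbar : ℂ)) with hz
  set T : A := (Sm : A) with hT
  set Ti : A := (↑Sm⁻¹ : A) with hTi
  have huz : u • (algebraMap ℂ A z) = algebraMap ℂ A ((Real.pi : ℂ) * Complex.I) := by
    rw [Algebra.smul_def, ← map_mul]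
    congr 1
    rw [hu, hz]
    push_cast
    field_simp
  -- Lie bracket values
  have lqtqs : ⁅qt, qs⁆ = 0 := by rw [Ring.lie_def, h6, sub_self]
  have lqtpt : ⁅qt, pt⁆ = -(algebraMap ℂ A z) := by
    rw [Ring.lie_def, ← h1]; noncomm_ring
  have lqtps : ⁅qt, ps⁆ = 0 := by rw [Ring.lie_def, ← h4, sub_self]
  have lpsqt : ⁅ps, qt⁆ = 0 := by rw [Ring.lie_def, h4, sub_self]
  have lpsqs : ⁅ps, qs⁆ = algebraMap ℂ A z := by rw [Ring.lie_def]; exact h2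
  have lpspt : ⁅ps, pt⁆ = 0 := by rw [Ring.lie_def, ← h5, sub_self]
  set a1 : A := qt + u • ps with ha1
  set a2 : A := -qt + qs + u • (-pt - ps) with ha2
  set b3 : A := -qs + u • pt with hb3
  have comm12 : a1 * a2 - a2 * a1 = algebraMap ℂ A (2 * ((Real.pi : ℂ) * Complex.I)) := by
    rw [← Ring.lie_def, ha1, ha2]
    letI : LieRing A := LieRing.ofAssociativeRing
    simp only [lie_add, add_lie, lie_neg, neg_lie, lie_sub, sub_lie, lie_smul, smul_lie,
      lie_self, lqtqs, lqtpt, lqtps, lpsqt, lpsqs, lpspt, smul_zero, smul_neg, neg_neg,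
      add_zero, zero_add, sub_zero, zero_sub, neg_zero]
    rw [huz, two_mul, map_add]

  -- step 1 : E a1 * E a2
  have hc1 : Commute (a1 * a2 - a2 * a1) a1 := by
    rw [comm12]; exact Algebra.commutes _ _
  have hc2 : Commute (a1 * a2 - a2 * a1) a2 := by
    rw [comm12]; exact Algebra.commutes _ _
  have step1 : E a1 * E a2 = Complex.exp ((Real.pi : ℂ) * Complex.I) • E (-b3) := by
    rw [hBCH a1 a2 hc1 hc2, comm12]
    have harg : a1 + a2 + ((1 : ℂ) / 2) • algebraMap ℂ A (2 * ((Real.pi : ℂ) * Complex.I))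
        = (-b3) + algebraMap ℂ A ((Real.pi : ℂ) * Complex.I) := by
      have h12 : ((1 : ℂ) / 2) • algebraMap ℂ A (2 * ((Real.pi : ℂ) * Complex.I))
          = algebraMap ℂ A ((Real.pi : ℂ) * Complex.I) := by
        rw [Algebra.smul_def, ← map_mul]; congr 1; ring
      rw [h12]
      congr 1
      rw [ha1, ha2, hb3]
      module
    rw [harg, hshift]
  -- step 2 : E (-b3) * E b3 = 1
  have hz0 : (-b3) * b3 - b3 * (-b3) = 0 := by noncomm_ring
  have step2 : E (-b3) * E b3 = 1 := by
    rw [hBCH (-b3) b3 (by rw [hz0]; exact Commute.zero_left _)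
      (by rw [hz0]; exact Commute.zero_left _), hz0]
    simp [hE0]
  have main : E a1 * E a2 * E b3
      = algebraMap ℂ A (Complex.exp ((Real.pi : ℂ) * Complex.I)) := by
    rw [step1, smul_mul_assoc, step2, Algebra.algebraMap_eq_smul_one]
  have mone : algebraMap ℂ A (Complex.exp ((Real.pi : ℂ) * Complex.I)) = (-1 : A) := by
    rw [Complex.exp_pi_mul_I, map_neg, map_one]
  refine ⟨main, mone, ?_⟩
  -- part 3
  have hinvmul : Ti * T = 1 := Sm.inv_mul
  have conj3 : T * b3 * Ti = a1 := by
    rw [hb3, ha1]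
    simp only [mul_add, add_mul, mul_neg, neg_mul, mul_sub, sub_mul, mul_smul_comm,
      smul_mul_assoc]
    rw [hSqs, hSpt]
    module
  have conj1 : T * a1 * Ti = a2 := by
    rw [ha1, ha2]
    simp only [mul_add, add_mul, mul_neg, neg_mul, mul_sub, sub_mul, mul_smul_comm,
      smul_mul_assoc]
    rw [hSqt, hSps]

  have conj2 : T * a2 * Ti = b3 := by
    rw [ha2, hb3]
    simp only [mul_add, add_mul, mul_neg, neg_mul, mul_sub, sub_mul, mul_smul_comm,
      smul_mul_assoc]
    rw [hSqt, hSqs, hSpt, hSps]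
    module
  have hTE3 : T * E b3 = E a1 * T := by
    have h := hSE b3
    rw [conj3] at h
    calc T * E b3 = T * E b3 * (Ti * T) := by rw [hinvmul, mul_one]
      _ = (T * E b3 * Ti) * T := by rw [mul_assoc, mul_assoc, mul_assoc]
      _ = E a1 * T := by rw [h]
  have hTE1 : T * E a1 = E a2 * T := by
    have h := hSE a1
    rw [conj1] at h
    calc T * E a1 = T * E a1 * (Ti * T) := by rw [hinvmul, mul_one]
      _ = (T * E a1 * Ti) * T := by rw [mul_assoc, mul_assoc, mul_assoc]
      _ = E a2 * T := by rw [h]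
  have hTE2 : T * E a2 = E b3 * T := by
    have h := hSE a2
    rw [conj2] at h
    calc T * E a2 = T * E a2 * (Ti * T) := by rw [hinvmul, mul_one]
      _ = (T * E a2 * Ti) * T := by rw [mul_assoc, mul_assoc, mul_assoc]
      _ = E b3 * T := by rw [h]
  have hT3 : T * (T * T) = 1 := by
    have h3' : (T : A) ^ 3 = 1 := by
      rw [hT, ← Units.val_pow_eq_pow_val, hS3, Units.val_one]
    rw [← h3', pow_succ, pow_succ, pow_one, mul_assoc]
  have s1 : ∀ x : A, T * (E a1 * x) = E a2 * (T * x) := fun x => by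
    rw [← mul_assoc, hTE1, mul_assoc]
  have s2 : ∀ x : A, T * (E a2 * x) = E b3 * (T * x) := fun x => by
    rw [← mul_assoc, hTE2, mul_assoc]
  have cube : (T * E b3) ^ 3 = E a1 * E a2 * E b3 := by
    rw [pow_succ, pow_succ, pow_one, hTE3]
    calc E a1 * T * (E a1 * T) * (E a1 * T)
        = E a1 * (T * (E a1 * (T * (E a1 * T)))) := by
          simp only [mul_assoc]
      _ = E a1 * (E a2 * (T * (T * (E a1 * T)))) := by rw [s1]
      _ = E a1 * (E a2 * (T * (E a2 * (T * T)))) := by rw [s1]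
      _ = E a1 * (E a2 * (E b3 * (T * (T * T)))) := by rw [s2]
      _ = E a1 * E a2 * E b3 := by rw [hT3, mul_one, mul_assoc]
  rw [smul_pow, cube, main, mone]
  simp [smul_neg, neg_smul]
end
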